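/- For all real numbers a, b, the matrix exponential of the 3×3 matrix [[0,a,b],[a,0,−b],[0,0,−a]] equals [[cosh a, sinh a, b·e⁻ᵃ],[sinh a, cosh a, −b·e⁻ᵃ],[0,0,e⁻ᵃ]]. -/

import Mathlib

open Matrix

noncomputable section

lemma exp_sq_zero (x : Matrix (Fin 3) (Fin 3) ℝ) (h : x ^ 2 = 0) :
    NormedSpace.exp x = 1 + x := by
  rw [NormedSpace.exp_eq_tsum ℝ]
  dsimp only
  rw [tsum_eq_sum (s := Finset.range 2) (fun n hn => by
    have h2 : 2 ≤ n := by simp at hn; omega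
    have : x ^ n = 0 := by
      rw [← Nat.sub_add_cancel h2, pow_add, h, mul_zero]
    simp [this])]
  simp [Finset.sum_range_succ]

lemma exp_S (a : ℝ) :
    NormedSpace.exp !![(0:ℝ), a, 0; a, 0, 0; 0, 0, -a]
      = !![Real.cosh a, Real.sinh a, 0; Real.sinh a, Real.cosh a, 0;
           0, 0, Real.exp (-a)] := by
  have hP : IsUnit (!![(1:ℝ),1,0;1,-1,0;0,0,1]) := by
    rw [Matrix.isUnit_iff_isUnit_det]
    rw [Matrix.det_fin_three]
    simp
    norm_num
  have hPinv : (!![(1:ℝ),1,0;1,-1,0;0,0,1])⁻¹ = !![1/2,1/2,0;1/2,-1/2,0;0,0,1] := by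
    apply Matrix.inv_eq_right_inv
    norm_num [Matrix.mul_fin_three]
    exact Matrix.one_fin_three.symm
  have hS : !![(0:ℝ), a, 0; a, 0, 0; 0, 0, -a]
      = !![(1:ℝ),1,0;1,-1,0;0,0,1] * Matrix.diagonal ![a, -a, -a]
        * (!![(1:ℝ),1,0;1,-1,0;0,0,1])⁻¹ := by
    rw [hPinv]
    have : Matrix.diagonal ![a, -a, -a] = !![a,0,0;0,-a,0;0,0,-a] := by
      ext i j; fin_cases i <;> fin_cases j <;> simp [Matrix.diagonal_apply, Matrix.vecHead, Matrix.vecTail]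
    rw [this]
    norm_num [Matrix.mul_fin_three]
    ring_nf
  rw [hS, Matrix.exp_conj _ _ hP, Matrix.exp_diagonal, hPinv]
  have hd : (NormedSpace.exp ![a, -a, -a]) = ![Real.exp a, Real.exp (-a), Real.exp (-a)] := by
    rw [Pi.exp_def]
    funext i; fin_cases i <;> simp [Real.exp_eq_exp_ℝ]
  have hdm : Matrix.diagonal (NormedSpace.exp ![a, -a, -a])
      = !![Real.exp a,0,0;0,Real.exp (-a),0;0,0,Real.exp (-a)] := by
    rw [hd]; ext i j; fin_cases i <;> fin_cases j <;> simp [Matrix.diagonal_apply, Matrix.vecHead, Matrix.vecTail]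
  rw [hdm]
  norm_num [Matrix.mul_fin_three, Real.cosh_eq, Real.sinh_eq]
  ring_nf
  simp only [and_self]

theorem stmt3 (a b : ℝ) :
    NormedSpace.exp !![0, a, b; a, 0, -b; 0, 0, -a]
      = !![Real.cosh a, Real.sinh a, b * Real.exp (-a);
           Real.sinh a, Real.cosh a, -(b * Real.exp (-a));
           0, 0, Real.exp (-a)] := by
  have hsplit : !![(0:ℝ), a, b; a, 0, -b; 0, 0, -a]
      = !![(0:ℝ), a, 0; a, 0, 0; 0, 0, -a] + !![(0:ℝ),0,b;0,0,-b;0,0,0] := by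
    norm_num
  have hcomm : Commute !![(0:ℝ), a, 0; a, 0, 0; 0, 0, -a] !![(0:ℝ),0,b;0,0,-b;0,0,0] := by
    ext i j
    fin_cases i <;> fin_cases j <;>
      simp [Matrix.mul_apply, Fin.sum_univ_succ] <;> ring
  have hN2 : (!![(0:ℝ),0,b;0,0,-b;0,0,0]) ^ 2 = 0 := by
    rw [pow_two]
    ext i j
    fin_cases i <;> fin_cases j <;>
      simp [Matrix.mul_apply, Fin.sum_univ_succ]
  rw [hsplit, Matrix.exp_add_of_commute _ _ hcomm, exp_S, exp_sq_zero _ hN2]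
  have h1 : (1 : Matrix (Fin 3) (Fin 3) ℝ) + !![(0:ℝ),0,b;0,0,-b;0,0,0]
      = !![1,0,b;0,1,-b;0,0,1] := by
    ext i j; fin_cases i <;> fin_cases j <;> simp [Matrix.one_apply, Matrix.vecHead, Matrix.vecTail]
  rw [h1]
  norm_num [Matrix.mul_fin_three, Real.cosh_eq, Real.sinh_eq]
  ring_nf
  simp only [and_self]
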